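/- Let Z be a nonvanishing C² function on (a,b) satisfying -Z'' + VZ - 1/(4Z³) = 0, and define the first-order operators 𝒟^±[Z] := d/dx - Z'/Z ∓ 1/(2Z²). Then for every C² function f, (𝒟^±[Z] - 2 d/dx)(𝒟^±[Z] f) = -f'' + V f. -/

import Mathlib

theorem darboux_factorization
    (V Z : ℝ → ℝ) (a b : ℝ)
    (hV : ContinuousOn V (Set.Ioo a b))
    (hZ0 : ∀ x ∈ Set.Ioo a b, Z x ≠ 0)
    (hZC2 : ContDiffOn ℝ 2 Z (Set.Ioo a b))
    (hZode : ∀ x ∈ Set.Ioo a b,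
      -(deriv (deriv Z) x) + V x * Z x - 1 / (4 * (Z x) ^ 3) = 0)
    (ε : ℝ) (hε : ε = 1 ∨ ε = -1)
    (D : (ℝ → ℝ) → (ℝ → ℝ))
    (hD : ∀ f x, D f x = deriv f x - (deriv Z x / Z x) * f x - ε * f x / (2 * (Z x) ^ 2))
    (f : ℝ → ℝ) (hf : ContDiffOn ℝ 2 f (Set.Ioo a b)) :
    ∀ x ∈ Set.Ioo a b,
      D (D f) x - 2 * deriv (D f) x = -(deriv (deriv f) x) + V x * f x := by
  intro x hx
  have hopen : IsOpen (Set.Ioo a b) := isOpen_Ioo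
  have hZx := hZ0 x hx
  have one_le_two' : (1 : WithTop ℕ∞) ≤ 2 := by norm_num
  have hZd : HasDerivAt Z (deriv Z x) x :=
    ((hZC2.differentiableOn (by norm_num)).differentiableAt (hopen.mem_nhds hx)).hasDerivAt
  have hfd : HasDerivAt f (deriv f x) x :=
    ((hf.differentiableOn (by norm_num)).differentiableAt (hopen.mem_nhds hx)).hasDerivAt
  have hZ'c : ContDiffOn ℝ 1 (deriv Z) (Set.Ioo a b) :=
    hZC2.deriv_of_isOpen hopen (by norm_num)
  have hf'c : ContDiffOn ℝ 1 (deriv f) (Set.Ioo a b) :=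
    hf.deriv_of_isOpen hopen (by norm_num)
  have hZ'' : HasDerivAt (deriv Z) (deriv (deriv Z) x) x :=
    ((hZ'c.differentiableOn (by norm_num)).differentiableAt (hopen.mem_nhds hx)).hasDerivAt
  have hf'' : HasDerivAt (deriv f) (deriv (deriv f) x) x :=
    ((hf'c.differentiableOn (by norm_num)).differentiableAt (hopen.mem_nhds hx)).hasDerivAt
  have hDfe : D f = fun y => deriv f y - (deriv Z y / Z y) * f y - ε * f y / (2 * Z y ^ 2) :=
    funext (hD f)
  have hden0 : 2 * Z x ^ 2 ≠ 0 := mul_ne_zero two_ne_zero (pow_ne_zero 2 hZx)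
  have h1 : HasDerivAt (fun y => deriv Z y / Z y * f y)
      (((deriv (deriv Z) x * Z x - deriv Z x * deriv Z x) / Z x ^ 2) * f x
        + (deriv Z x / Z x) * deriv f x) x :=
    (hZ''.div hZd hZx).mul hfd
  have hden : HasDerivAt (fun y => 2 * Z y ^ 2) (2 * (2 * Z x * deriv Z x)) x := by
    simpa [mul_comm, mul_assoc, mul_left_comm] using ((hZd.pow 2).const_mul 2)
  have h2 : HasDerivAt (fun y => ε * f y / (2 * Z y ^ 2))
      ((ε * deriv f x * (2 * Z x ^ 2) - ε * f x * (2 * (2 * Z x * deriv Z x)))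
        / (2 * Z x ^ 2) ^ 2) x :=
    (hfd.const_mul ε).div hden hden0
  have hDf' : HasDerivAt (D f)
      (deriv (deriv f) x
        - (((deriv (deriv Z) x * Z x - deriv Z x * deriv Z x) / Z x ^ 2) * f x
            + (deriv Z x / Z x) * deriv f x)
        - (ε * deriv f x * (2 * Z x ^ 2) - ε * f x * (2 * (2 * Z x * deriv Z x)))
            / (2 * Z x ^ 2) ^ 2) x := by
    rw [hDfe]; exact (hf''.sub h1).sub h2
  have hderivDf := hDf'.deriv
  have hzode := hZode x hx
  have hz'' : deriv (deriv Z) x = V x * Z x - 1 / (4 * Z x ^ 3) := by linarith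
  rw [hD, hD, hderivDf, hz'']
  rcases hε with h | h <;> rw [h] <;> field_simp <;> ring
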